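/- Let p > 1 and d(0) > 0, and define d(c) = d(0)(1-c²)^{(p+1)/(p-1)} for c² < 1. Then d''(c) = d(0) · 2(p+1)/(p-1)² · (1-c²)^{(3-p)/(p-1)} · ((p+3)c² - (p-1)). In particular, d''(c) > 0 whenever (p-1)/(p+3) < c² < 1, and d''(c) < 0 whenever c² < (p-1)/(p+3). -/

import Mathlib

theorem klein_gordon_d_second_derivative (p d0 : ℝ) (hp : 1 < p) (hd0 : 0 < d0)
    (d : ℝ → ℝ)
    (hd : d = fun c : ℝ => d0 * (1 - c ^ 2) ^ ((p + 1) / (p - 1))) :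
    (∀ c : ℝ, c ^ 2 < 1 →
      deriv (deriv d) c =
        d0 * (2 * (p + 1) / (p - 1) ^ 2) * (1 - c ^ 2) ^ ((3 - p) / (p - 1)) *
          ((p + 3) * c ^ 2 - (p - 1))) ∧
    (∀ c : ℝ, (p - 1) / (p + 3) < c ^ 2 → c ^ 2 < 1 → 0 < deriv (deriv d) c) ∧
    (∀ c : ℝ, c ^ 2 < (p - 1) / (p + 3) → deriv (deriv d) c < 0) := by
  have hp1 : (0:ℝ) < p - 1 := by linarith
  set α : ℝ := (p + 1) / (p - 1) with hα
  -- derivative of base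
  have hbase : ∀ c : ℝ, HasDerivAt (fun c : ℝ => 1 - c ^ 2) (-(2 * c)) c := by
    intro c
    have h := (hasDerivAt_pow 2 c).const_sub 1
    simpa using h
  have hX : ∀ c : ℝ, c ^ 2 < 1 → (0:ℝ) < 1 - c ^ 2 := fun c hc => by linarith
  -- first derivative
  have hD1 : ∀ c : ℝ, c ^ 2 < 1 →
      HasDerivAt d (d0 * (α * (1 - c ^ 2) ^ (α - 1) * (-(2 * c)))) c := by
    intro c hc
    have h := (((hbase c).rpow_const (p := α) (Or.inl (ne_of_gt (hX c hc))))).const_mul d0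
    rw [hd]
    exact h.congr_deriv (by ring)
  have hopen : IsOpen {c : ℝ | c ^ 2 < 1} := by
    have : Continuous fun c : ℝ => c ^ 2 := by continuity
    exact isOpen_lt this continuous_const
  -- deriv d agrees with explicit formula on the open set
  have hderiv1 : ∀ c ∈ {c : ℝ | c ^ 2 < 1},
      deriv d c = d0 * (α * (1 - c ^ 2) ^ (α - 1) * (-(2 * c))) := by
    intro c hc
    exact (hD1 c hc).deriv
  -- second derivative
  have hD2 : ∀ c : ℝ, c ^ 2 < 1 →
      deriv (deriv d) c =
        d0 * (2 * (p + 1) / (p - 1) ^ 2) * (1 - c ^ 2) ^ ((3 - p) / (p - 1)) *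
          ((p + 3) * c ^ 2 - (p - 1)) := by
    intro c hc
    have hXc := hX c hc
    have hmem : {c : ℝ | c ^ 2 < 1} ∈ nhds c := hopen.mem_nhds hc
    have heq : deriv d =ᶠ[nhds c]
        fun c => d0 * (α * (1 - c ^ 2) ^ (α - 1) * (-(2 * c))) :=
      Filter.eventuallyEq_of_mem hmem hderiv1
    rw [heq.deriv_eq]
    -- derivative of the explicit first derivative
    have hu : HasDerivAt (fun c : ℝ => (1 - c ^ 2) ^ (α - 1))
        ((α - 1) * (1 - c ^ 2) ^ (α - 1 - 1) * (-(2 * c))) c := by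
      have := (hbase c).rpow_const (p := α - 1) (Or.inl (ne_of_gt hXc))
      convert this using 1
      ring
    have hv : HasDerivAt (fun c : ℝ => -(2 * c)) (-2) c := by
      exact (((hasDerivAt_id c).const_mul (2:ℝ)).neg).congr_deriv (by ring)
    have hprod := (hu.mul hv).const_mul (d0 * α)
    have h2 : HasDerivAt (fun c => d0 * (α * (1 - c ^ 2) ^ (α - 1) * (-(2 * c))))
        (d0 * α * ((α - 1) * (1 - c ^ 2) ^ (α - 1 - 1) * (-(2 * c)) * (-(2 * c))
          + (1 - c ^ 2) ^ (α - 1) * (-2))) c := by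
      refine (hprod.congr_deriv (by ring)).congr_of_eventuallyEq (Filter.Eventually.of_forall fun x => ?_)
      simp only [Pi.mul_apply]; ring
    rw [h2.deriv]
    -- algebraic simplification
    have hexp1 : α - 1 - 1 = (3 - p) / (p - 1) := by
      rw [hα]; field_simp; ring
    have hexp2 : α - 1 = (3 - p) / (p - 1) + 1 := by
      rw [hα]; field_simp; ring
    rw [hexp1, hexp2, Real.rpow_add hXc, Real.rpow_one]
    have hα2 : α = (p + 1) / (p - 1) := hα
    rw [hα2]
    field_simp
    ring
  refine ⟨hD2, ?_, ?_⟩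
  · intro c hc1 hc2
    rw [hD2 c hc2]
    have h1 : 0 < 2 * (p + 1) / (p - 1) ^ 2 := by positivity
    have h2 : (0:ℝ) < (1 - c ^ 2) ^ ((3 - p) / (p - 1)) :=
      Real.rpow_pos_of_pos (hX c hc2) _
    have h3 : 0 < (p + 3) * c ^ 2 - (p - 1) := by
      have hp3 : (0:ℝ) < p + 3 := by linarith
      rw [div_lt_iff₀ hp3] at hc1
      nlinarith
    positivity
  · intro c hc1
    have hc2 : c ^ 2 < 1 := by
      have hp3 : (0:ℝ) < p + 3 := by linarith
      have : (p - 1) / (p + 3) < 1 := by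
        rw [div_lt_one hp3]; linarith
      linarith
    rw [hD2 c hc2]
    have h1 : 0 < d0 * (2 * (p + 1) / (p - 1) ^ 2) * (1 - c ^ 2) ^ ((3 - p) / (p - 1)) := by
      have := Real.rpow_pos_of_pos (hX c hc2) ((3 - p) / (p - 1))
      positivity
    have h3 : (p + 3) * c ^ 2 - (p - 1) < 0 := by
      have hp3 : (0:ℝ) < p + 3 := by linarith
      rw [lt_div_iff₀ hp3] at hc1
      nlinarith
    exact mul_neg_of_pos_of_neg h1 h3
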